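/- Let T be left-quantalic, λ diamond-like with monad-morphism transpose, g : S → TS, X ⊆ S, and let Z be the least fixed point of the monotone operator F(Y) = { Δ ∈ S | g(Δ) ∈ λ_S(Y) } ∪ X on Pow(S). Then Z ⊆ { Δ ∈ S | g*(Δ) ∈ λ_S(X) }. -/

import Mathlib

/-- A monad on `Set` (the category of types), given by object map, functorial
action, unit and multiplication, satisfying the usual laws. -/
structure SetMonad where
  obj : Type → Type
  map : {X Y : Type} → (X → Y) → obj X → obj Y
  unit : {X : Type} → X → obj X
  mult : {X : Type} → obj (obj X) → obj X
  map_id : ∀ {X : Type} (t : obj X), map id t = t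
  map_comp : ∀ {X Y Z : Type} (f : X → Y) (g : Y → Z) (t : obj X),
    map (g ∘ f) t = map g (map f t)
  unit_nat : ∀ {X Y : Type} (f : X → Y) (x : X), map f (unit x) = unit (f x)
  mult_nat : ∀ {X Y : Type} (f : X → Y) (t : obj (obj X)),
    map f (mult t) = mult (map (map f) t)
  mult_unit : ∀ {X : Type} (t : obj X), mult (unit t) = t
  mult_map_unit : ∀ {X : Type} (t : obj X), mult (map unit t) = t
  mult_assoc : ∀ {X : Type} (t : obj (obj (obj X))),
    mult (mult t) = mult (map mult t)

/-- A morphism of monads on `Set`. -/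
structure MonadMor (M N : SetMonad) where
  app : {X : Type} → M.obj X → N.obj X
  nat : ∀ {X Y : Type} (f : X → Y) (t : M.obj X), N.map f (app t) = app (M.map f t)
  unit : ∀ {X : Type} (x : X), app (M.unit x) = N.unit x
  mult : ∀ {X : Type} (t : M.obj (M.obj X)),
    app (M.mult t) = N.mult (N.map (fun s => app s) (app t))

/-- The covariant powerset monad. -/
def PowM : SetMonad where
  obj := Set
  map f := Set.image f
  unit x := {x}
  mult := Set.sUnion
  map_id := by intro X t; simp
  map_comp := by intro X Y Z f g t; exact Set.image_comp g f t
  unit_nat := by intro X Y f x; simp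
  mult_nat := by intro X Y f t; ext y; simp [Set.mem_sUnion]; tauto
  mult_unit := by intro X t; simp
  mult_map_unit := by intro X t; ext x; simp
  mult_assoc := by intro X t; ext x; simp [Set.mem_sUnion]; tauto

/-- Kleisli composition. -/
def kcomp (T : SetMonad) {X : Type} (f g : X → T.obj X) : X → T.obj X :=
  fun x => T.mult (T.map g (f x))

/-- Kleisli iteration. -/
def kiter (T : SetMonad) {X : Type} (f : X → T.obj X) : ℕ → X → T.obj X
  | 0 => fun x => T.unit x
  | n + 1 => kcomp T f (kiter T f n)

/-- Kleisli star: pointwise join of all Kleisli iterates. -/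
noncomputable def kstar (T : SetMonad) [inst : ∀ X : Type, CompleteLattice (T.obj X)]
    {X : Type} (f : X → T.obj X) : X → T.obj X :=
  fun x => ⨆ n : ℕ, kiter T f n x

/-- A predicate lifting `λ` is diamond-like: joins in `λ_X(U)` are witnessed by
some component. -/
def DiamondLike (T : SetMonad) [∀ X : Type, CompleteLattice (T.obj X)]
    (lam : {X : Type} → Set X → Set (T.obj X)) : Prop :=
  ∀ {X I : Type} (U : Set X) (t : I → T.obj X),
    (⨆ i, t i) ∈ lam U ↔ ∃ i, t i ∈ lam U

/-- A predicate lifting `λ` is box-like: joins lie in `λ_X(U)` iff all components do. -/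
def BoxLike (T : SetMonad) [∀ X : Type, CompleteLattice (T.obj X)]
    (lam : {X : Type} → Set X → Set (T.obj X)) : Prop :=
  ∀ {X I : Type} (U : Set X) (t : I → T.obj X),
    (⨆ i, t i) ∈ lam U ↔ ∀ i, t i ∈ lam U

/-- Left-quantalic: Kleisli composition left-distributes over pointwise joins of
Kleisli arrows. -/
def LeftQuantalic (T : SetMonad) [∀ X : Type, CompleteLattice (T.obj X)] : Prop :=
  ∀ {X I : Type} (f : X → T.obj X) (g : I → X → T.obj X) (x : X),
    kcomp T f (fun y => ⨆ i, g i y) x = ⨆ i, kcomp T f (g i) x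

/-- let `T` be left-quantalic, `λ` diamond-like with monad-morphism
transpose, `g : S → TS`, `X ⊆ S`, and let `Z` be the least fixed point (given by
Knaster–Tarski as the intersection of all prefixed points) of the operator
`F(Y) = {Δ | g(Δ) ∈ λ_S(Y)} ∪ X`. Then `Z ⊆ {Δ | g*(Δ) ∈ λ_S(X)}`. -/
theorem stmt18 (T : SetMonad) [∀ X : Type, CompleteLattice (T.obj X)]
    (hq : LeftQuantalic T)
    (lam : {X : Type} → Set X → Set (T.obj X))
    (hdia : DiamondLike T lam)
    (lam_nat : ∀ {X Y : Type} (f : X → Y) (U : Set Y),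
      lam (f ⁻¹' U) = (T.map f) ⁻¹' lam U)
    (lam_unit : ∀ {X : Type} (x : X) (U : Set X), T.unit x ∈ lam U ↔ x ∈ U)
    (lam_mult : ∀ {X : Type} (t : T.obj (T.obj X)) (U : Set X),
      T.mult t ∈ lam U ↔ t ∈ lam (lam U))
    {S : Type} (g : S → T.obj S) (Xc : Set S) :
    ⋂₀ {Y : Set S | {Δ : S | g Δ ∈ lam Y} ∪ Xc ⊆ Y}
      ⊆ {Δ : S | kstar T g Δ ∈ lam Xc} := by
  intro Δ hΔ
  apply hΔ
  intro x hx
  rcases hx with hx | hx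
  · show kstar T g x ∈ lam Xc
    have h1 : g x ∈ lam ((kstar T g) ⁻¹' lam Xc) := hx
    rw [lam_nat] at h1
    have key : kcomp T g (kstar T g) x ∈ lam Xc := by
      unfold kcomp
      rw [lam_mult]
      exact h1
    have heq : kcomp T g (kstar T g) x = ⨆ n, kiter T g (n + 1) x := by
      have h2 := hq g (fun n => kiter T g n) x
      exact h2
    rw [heq] at key
    rcases (hdia Xc _).mp key with ⟨n, hn⟩
    exact (hdia Xc (fun n => kiter T g n x)).mpr ⟨n + 1, hn⟩
  · show kstar T g x ∈ lam Xc
    exact (hdia Xc _).mpr ⟨0, (lam_unit x Xc).mpr hx⟩
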